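/- arXiv:1703.04516 — 2 statements merged into one kernel-verified Lean document; each statement's English description precedes it below -/
import Mathlib

section
/- Let A be a Grothendieck abelian category and B a localizing subcategory satisfying (Inj). Then every indecomposable injective object of A either belongs to B or is torsion-free; the indecomposable injective objects of A belonging to B are exactly the indecomposable injective objects of B; and T induces a bijection between isomorphism classes of torsion-free indecomposable injective objects of A and isomorphism classes of indecomposable injective objects of A/B. Consequently the set of isomorphism classes of indecomposable injectives of A is the disjoint union of those of B and those of A/B. -/
/-!
STATEMENT 4. Let `A` be a Grothendieck abelian category and `B` a localizing
subcategory satisfying (Inj).  Then: every indecomposable injective of `A`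
either belongs to `B` or is torsion-free (and not both); the indecomposable
injectives of `A` lying in `B` are exactly the indecomposable injectives of the
category `B`; and `T` induces a bijection between isomorphism classes of
torsion-free indecomposable injectives of `A` and isomorphism classes of
indecomposable injectives of `A/B`.  (Together these say that the set of
isomorphism classes of indecomposable injectives of `A` is the disjoint union
of those of `B` and those of `A/B`.)

Encoding: `B = ker T` for an exact localization functor `T : A ⥤ Q` with fully
faithful right adjoint `S`; the torsion functor `Γ` is characterized by
`IsTorsionFunctor`; an object is indecomposable if it is nonzero and not the
direct sum (biproduct) of two nonzero objects.
-/

open CategoryTheory Limits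

universe v u u'

/-- `X` is indecomposable: it is nonzero and admits no decomposition as the
direct sum of two nonzero objects. -/
def Indec {C : Type*} [Category C] [HasZeroMorphisms C] [HasBinaryBiproducts C]
    (X : C) : Prop :=
  ¬ IsZero X ∧ ∀ Y Z : C, (Y ⊞ Z ≅ X) → IsZero Y ∨ IsZero Z

/-- `X` is indecomposable within the full subcategory of objects satisfying
`P`: it is nonzero and admits no decomposition as the direct sum of two nonzero
objects satisfying `P`. -/
def IndecWithin {C : Type*} [Category C] [HasZeroMorphisms C]
    [HasBinaryBiproducts C] (P : C → Prop) (X : C) : Prop :=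
  ¬ IsZero X ∧ ∀ Y Z : C, P Y → P Z → (Y ⊞ Z ≅ X) → IsZero Y ∨ IsZero Z

variable {A : Type u} [Category.{v} A] [Abelian A]
variable {Q : Type u'} [Category.{v} Q] [Abelian Q]

/-- Membership in the localizing subcategory `B`, realized as the kernel of the
localization functor `T`. -/
def memB (T : A ⥤ Q) (N : A) : Prop := IsZero (T.obj N)

/-- `Γ` (together with the natural inclusion `ε : Γ ⟶ 𝟭 A`) is the torsion
functor with respect to the localizing subcategory `B = ker T`. -/
structure IsTorsionFunctor (T : A ⥤ Q) (Γ : A ⥤ A) (ε : Γ ⟶ 𝟭 A) : Prop where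
  mem : ∀ M : A, memB T (Γ.obj M)
  mono : ∀ M : A, Mono (ε.app M)
  isMax : ∀ (M N : A) (f : N ⟶ M), Mono f → memB T N →
    ∃ g : N ⟶ Γ.obj M, g ≫ ε.app M = f


section Helpers

open ZeroObject

variable {A : Type u} [Category.{v} A] [Abelian A]
variable {Q : Type u'} [Category.{v} Q] [Abelian Q]

/-- An additive functor sends binary biproducts to binary biproducts. -/
noncomputable def addMapBiprod {C : Type*} {D : Type*} [Category C] [Category D] [Preadditive C]
    [Preadditive D] [HasBinaryBiproducts C] [HasBinaryBiproducts D]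
    (F : C ⥤ D) [F.Additive] (X Y : C) : F.obj (X ⊞ Y) ≅ F.obj X ⊞ F.obj Y where
  hom := biprod.lift (F.map biprod.fst) (F.map biprod.snd)
  inv := biprod.desc (F.map biprod.inl) (F.map biprod.inr)
  hom_inv_id := by
    rw [biprod.lift_desc, ← F.map_comp, ← F.map_comp, ← F.map_add, biprod.total, F.map_id]
  inv_hom_id := by
    ext <;> simp [← F.map_comp]

/-- A retract gives a biproduct decomposition. -/
lemma exists_biprod_of_retract {X I : A} (f : X ⟶ I) (r : I ⟶ X) (hr : f ≫ r = 𝟙 X) :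
    ∃ Z : A, Nonempty (X ⊞ Z ≅ I) := by
  have hp : (𝟙 I - r ≫ f) ≫ r = 0 := by
    simp only [Preadditive.sub_comp, Category.id_comp, Category.assoc, hr, Category.comp_id,
      sub_self]
  refine ⟨kernel r, ⟨?_⟩⟩
  let q : I ⟶ kernel r := kernel.lift r (𝟙 I - r ≫ f) hp
  have hq : q ≫ kernel.ι r = 𝟙 I - r ≫ f := kernel.lift_ι _ _ _
  let bic : BinaryBicone X (kernel r) :=
  { pt := I
    fst := r
    snd := q
    inl := f
    inr := kernel.ι r
    inl_fst := hr
    inl_snd := by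
      rw [← cancel_mono (kernel.ι r), Category.assoc, hq]
      simp [Preadditive.comp_sub, reassoc_of% hr]
    inr_fst := kernel.condition r
    inr_snd := by
      rw [← cancel_mono (kernel.ι r), Category.assoc, hq, Category.id_comp,
        Preadditive.comp_sub, Category.comp_id, ← Category.assoc, kernel.condition, zero_comp,
        sub_zero]
  }
  have tot : bic.fst ≫ bic.inl + bic.snd ≫ bic.inr = 𝟙 bic.pt := by
    show r ≫ f + q ≫ kernel.ι r = 𝟙 I
    rw [hq]
    abel
  exact (biprod.uniqueUpToIso X (kernel r) (isBinaryBilimitOfTotal bic tot)).symm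

section T

variable (T : A ⥤ Q) (S : Q ⥤ A) (adj : T ⊣ S)

lemma memB_of_iso {X Y : A} (e : X ≅ Y) (h : memB T X) : memB T Y :=
  h.of_iso (T.mapIso e).symm

lemma memB_of_mono [T.PreservesMonomorphisms] {N M : A} (f : N ⟶ M) [Mono f]
    (h : memB T M) : memB T N :=
  IsZero.of_mono (T.map f) h

include adj in
lemma S_additive [T.Additive] [PreservesFiniteLimits T] : S.Additive := by
  haveI := adj.rightAdjoint_preservesLimits
  haveI : S.PreservesZeroMorphisms := by
    refine Functor.preservesZeroMorphisms_of_map_zero_object (F := S) ?_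
    have hT : IsTerminal (S.obj (0 : Q)) :=
      IsTerminal.isTerminalObj S _ HasZeroObject.zeroIsTerminal
    exact hT.uniqueUpToIso HasZeroObject.zeroIsTerminal
  exact Functor.additive_of_preserves_binary_products S

include adj in
/-- Any morphism from a torsion object to an object in the image of `S` vanishes. -/
lemma hom_to_S_eq_zero [T.Additive] [PreservesFiniteLimits T] {N : A} {X : Q}
    (hN : memB T N) (f : N ⟶ S.obj X) : f = 0 := by
  haveI := S_additive T S adj
  have h0 : (adj.homEquiv N X).symm f = 0 := hN.eq_of_src _ _
  have : f = adj.homEquiv N X ((adj.homEquiv N X).symm f) := (Equiv.apply_symm_apply _ _).symm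
  rw [this, h0, Adjunction.homEquiv_unit, Functor.map_zero, comp_zero]

include adj in
/-- `S`-objects are torsion free. -/
lemma gammaS_isZero [T.Additive] [PreservesFiniteLimits T]
    (Γ : A ⥤ A) (ε : Γ ⟶ 𝟭 A) (hΓ : IsTorsionFunctor T Γ ε) (X : Q) :
    IsZero (Γ.obj (S.obj X)) := by
  haveI := hΓ.mono (S.obj X)
  exact IsZero.of_mono_eq_zero (ε.app (S.obj X))
    (hom_to_S_eq_zero T S adj (hΓ.mem _) _)

/-- A torsion object with vanishing torsion subobject is zero. -/
lemma isZero_of_memB_of_torsionFree (Γ : A ⥤ A) (ε : Γ ⟶ 𝟭 A)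
    (hΓ : IsTorsionFunctor T Γ ε) {I : A} (hB : memB T I) (hTF : IsZero (Γ.obj I)) :
    IsZero I := by
  obtain ⟨g, hg⟩ := hΓ.isMax I I (𝟙 I) inferInstance hB
  rw [hTF.eq_of_tgt g 0, zero_comp] at hg
  rw [IsZero.iff_id_eq_zero]
  exact hg.symm

/-- The unit is an isomorphism on a torsion-free injective object. -/
lemma unit_isIso [T.Additive] [PreservesFiniteLimits T] [IsIso adj.counit]
    (Γ : A ⥤ A) (ε : Γ ⟶ 𝟭 A) (hΓ : IsTorsionFunctor T Γ ε)
    {I : A} (hI : Injective I) (hTF : IsZero (Γ.obj I)) :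
    IsIso (adj.unit.app I) := by
  haveI := hI
  haveI := adj.leftAdjoint_preservesColimits
  set η := adj.unit.app I with hη
  -- `T.map η` is an isomorphism
  have h1 : T.map η ≫ adj.counit.app (T.obj I) = 𝟙 _ := adj.left_triangle_components I
  have h2 : T.map η = inv (adj.counit.app (T.obj I)) := by
    rw [← cancel_mono (adj.counit.app (T.obj I)), h1, IsIso.inv_hom_id]
  haveI hTη : IsIso (T.map η) := by rw [h2]; infer_instance
  -- the kernel of `η` is torsion, hence zero
  have hK : memB T (kernel η) := by
    have : T.map (kernel.ι η) ≫ T.map η = 0 := by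
      rw [← T.map_comp, kernel.condition, T.map_zero]
    have hz : T.map (kernel.ι η) = 0 := by
      rw [← cancel_mono (T.map η), this, zero_comp]
    exact IsZero.of_mono_eq_zero _ hz
  obtain ⟨g, hg⟩ := hΓ.isMax I (kernel η) (kernel.ι η) inferInstance hK
  have hker : kernel.ι η = 0 := by rw [← hg, hTF.eq_of_tgt g 0, zero_comp]
  haveI hmono : Mono η := Abelian.mono_of_kernel_ι_eq_zero _ hker
  -- split the mono `η` using injectivity
  obtain ⟨r, hr⟩ := hI.factors (𝟙 I) η
  -- the cokernel of `η` is torsion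
  have hC : memB T (cokernel η) := by
    have : T.map η ≫ T.map (cokernel.π η) = 0 := by
      rw [← T.map_comp, cokernel.condition, T.map_zero]
    have hz : T.map (cokernel.π η) = 0 := by
      rw [← cancel_epi (T.map η), this, comp_zero]
    exact IsZero.of_epi_eq_zero _ hz
  -- hence the copiece `𝟙 - r ≫ η` vanishes
  have hs : η ≫ (𝟙 ((T ⋙ S).obj I) - r ≫ η) = 0 := by
    rw [Preadditive.comp_sub, Category.comp_id, ← Category.assoc, hr]
    simp
  have hdesc : cokernel.π η ≫ cokernel.desc η _ hs = 𝟙 ((T ⋙ S).obj I) - r ≫ η :=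
    cokernel.π_desc _ _ _
  have hzero : cokernel.desc η _ hs = 0 := hom_to_S_eq_zero T S adj hC _
  have hre : r ≫ η = 𝟙 ((T ⋙ S).obj I) := by
    have := hdesc
    rw [hzero, comp_zero] at this
    have h' : 𝟙 ((T ⋙ S).obj I) - r ≫ η = 0 := this.symm
    rw [sub_eq_zero] at h'
    exact h'.symm
  exact ⟨r, hr, hre⟩

/-- `T` of a torsion-free injective is injective. -/
lemma T_obj_injective [T.Additive] [PreservesFiniteLimits T] [IsIso adj.counit]
    {I : A} (hI : Injective I) (hη : IsIso (adj.unit.app I)) :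
    Injective (T.obj I) := by
  haveI := hI
  haveI := adj.rightAdjoint_preservesLimits
  constructor
  intro X Y g f hf
  haveI := hf
  haveI : Mono (S.map f) := inferInstance
  obtain ⟨h, hh⟩ := hI.factors (S.map g ≫ inv (adj.unit.app I)) (S.map f)
  refine ⟨inv (adj.counit.app Y) ≫ T.map h, ?_⟩
  rw [← cancel_epi (adj.counit.app X)]
  have hnat : adj.counit.app X ≫ f = T.map (S.map f) ≫ adj.counit.app Y :=
    (adj.counit.naturality f).symm
  have hnatg : adj.counit.app X ≫ g = T.map (S.map g) ≫ adj.counit.app (T.obj I) :=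
    (adj.counit.naturality g).symm
  haveI := hη
  have h3 : inv (T.map (adj.unit.app I)) = adj.counit.app (T.obj I) :=
    IsIso.inv_eq_of_hom_inv_id (adj.left_triangle_components I)
  calc adj.counit.app X ≫ f ≫ inv (adj.counit.app Y) ≫ T.map h
      = T.map (S.map f) ≫ (adj.counit.app Y ≫ inv (adj.counit.app Y)) ≫ T.map h := by
        rw [← Category.assoc, hnat]; simp only [Category.assoc]
    _ = T.map (S.map f ≫ h) := by rw [IsIso.hom_inv_id, Category.id_comp, T.map_comp]
    _ = T.map (S.map g) ≫ T.map (inv (adj.unit.app I)) := by rw [hh, T.map_comp]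
    _ = T.map (S.map g) ≫ inv (T.map (adj.unit.app I)) := by rw [T.map_inv]
    _ = T.map (S.map g) ≫ adj.counit.app (T.obj I) := by rw [h3]
    _ = adj.counit.app X ≫ g := hnatg.symm


lemma monoA_of_monoB [PreservesFiniteLimits T]
    {X Y : ObjectProperty.FullSubcategory (memB T)} (f : X ⟶ Y) (hf : Mono f) :
    Mono (f.hom) := by
  have hK : memB T (kernel (f.hom)) :=
    memB_of_mono T (kernel.ι _) X.2
  let K : ObjectProperty.FullSubcategory (memB T) := ⟨kernel (f.hom), hK⟩
  have h0 : (ObjectProperty.homMk (kernel.ι f.hom) : K ⟶ X) ≫ f =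
      (ObjectProperty.homMk 0 : K ⟶ X) ≫ f := by
    ext
    show kernel.ι _ ≫ (f.hom) = (0 : K.obj ⟶ X.obj) ≫ _
    rw [kernel.condition, zero_comp]
  have hι : kernel.ι (f.hom) = 0 := congrArg (·.hom) (hf.right_cancellation _ _ h0)
  exact Abelian.mono_of_kernel_ι_eq_zero _ hι

include adj in
/-- The torsion part of an injective object is injective in `B`. -/
lemma gammaI_injective_B [T.Additive] [PreservesFiniteLimits T]
    (Γ : A ⥤ A) (ε : Γ ⟶ 𝟭 A) (hΓ : IsTorsionFunctor T Γ ε)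
    {I : A} (hI : Injective I) :
    Injective (⟨Γ.obj I, hΓ.mem I⟩ : ObjectProperty.FullSubcategory (memB T)) := by
  haveI := hI
  haveI := adj.leftAdjoint_preservesColimits
  haveI := hΓ.mono I
  constructor
  intro X Y g f hf
  haveI : Mono (f.hom) := monoA_of_monoB T f hf
  obtain ⟨h, hh⟩ := hI.factors ((g.hom) ≫ ε.app I)
    (f.hom)
  have hmem : memB T (image h) := IsZero.of_epi (T.map (factorThruImage h)) Y.2
  obtain ⟨u, hu⟩ := hΓ.isMax I (image h) (image.ι h) inferInstance hmem
  refine ⟨ObjectProperty.homMk (factorThruImage h ≫ u), ?_⟩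
  ext
  show (f.hom) ≫ (factorThruImage h ≫ u) = g.hom
  rw [← cancel_mono (ε.app I)]
  simp only [Category.assoc, hu, image.fac, hh]

end T

end Helpers

theorem statement4
    -- `A` is Grothendieck abelian:
    [HasColimits A] [AB5 A] [HasSeparator A]
    -- the localization functor `T` and the section functor `S`:
    (T : A ⥤ Q) (S : Q ⥤ A) (adj : T ⊣ S)
    [T.Additive] [PreservesFiniteLimits T] [IsIso adj.counit]
    -- property (Inj): injective objects of `B` remain injective in `A`:
    (hInj : ∀ J : ObjectProperty.FullSubcategory (memB T), Injective J → Injective J.obj)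
    -- the torsion functor `Γ`:
    (Γ : A ⥤ A) (ε : Γ ⟶ 𝟭 A) (hΓ : IsTorsionFunctor T Γ ε) :
    -- (1) every indecomposable injective of `A` lies in `B` or is torsion-free:
    (∀ I : A, Injective I → Indec I → memB T I ∨ IsZero (Γ.obj I)) ∧
    -- (2) ... and not both:
    (∀ I : A, Injective I → Indec I → ¬ (memB T I ∧ IsZero (Γ.obj I))) ∧
    -- (3) indecomposable injectives of `A` lying in `B`
    --     = indecomposable injectives of the category `B`:
    (∀ (I : A) (h : memB T I),
      (Injective I ∧ Indec I) ↔
        (Injective (⟨I, h⟩ : ObjectProperty.FullSubcategory (memB T)) ∧ IndecWithin (memB T) I)) ∧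
    -- (4) `T` gives a bijection on isomorphism classes between torsion-free
    --     indecomposable injectives of `A` and indecomposable injectives of `A/B`:
    (∀ I : A, Injective I → IsZero (Γ.obj I) → Indec I →
      Injective (T.obj I) ∧ Indec (T.obj I)) ∧
    (∀ I I' : A, Injective I → IsZero (Γ.obj I) → Indec I →
      Injective I' → IsZero (Γ.obj I') → Indec I' →
      Nonempty (T.obj I ≅ T.obj I') → Nonempty (I ≅ I')) ∧
    (∀ J : Q, Injective J → Indec J →
      ∃ I : A, Injective I ∧ IsZero (Γ.obj I) ∧ Indec I ∧
        Nonempty (T.obj I ≅ J))  := by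
  haveI := adj.leftAdjoint_preservesColimits
  haveI := S_additive T S adj
  refine ⟨?_, ?_, ?_, ?_, ?_, ?_⟩
  · -- (1)
    intro I hI hIndec
    by_cases hTF : IsZero (Γ.obj I)
    · exact Or.inr hTF
    · left
      haveI := hΓ.mono I
      have hBinj : Injective (Γ.obj I) := hInj _ (gammaI_injective_B T S adj Γ ε hΓ hI)
      obtain ⟨r, hr⟩ := hBinj.factors (𝟙 (Γ.obj I)) (ε.app I)
      obtain ⟨Z, ⟨e⟩⟩ := exists_biprod_of_retract (ε.app I) r hr
      rcases hIndec.2 _ _ e with hz | hz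
      · exact absurd hz hTF
      · have hinr : (biprod.inr : Z ⟶ Γ.obj I ⊞ Z) = 0 := hz.eq_of_src _ _
        have htot : (biprod.fst : Γ.obj I ⊞ Z ⟶ _) ≫ biprod.inl = 𝟙 _ := by
          have h' := biprod.total (X := Γ.obj I) (Y := Z)
          rwa [hinr, comp_zero, add_zero] at h'
        haveI : IsIso (biprod.inl : Γ.obj I ⟶ Γ.obj I ⊞ Z) :=
          ⟨biprod.fst, biprod.inl_fst, htot⟩
        exact memB_of_iso T (asIso (biprod.inl : Γ.obj I ⟶ _) ≪≫ e) (hΓ.mem I)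
  · -- (2)
    rintro I hI hIndec ⟨hB, hTF⟩
    exact hIndec.1 (isZero_of_memB_of_torsionFree T Γ ε hΓ hB hTF)
  · -- (3)
    intro I h
    constructor
    · rintro ⟨hI, hIndec⟩
      refine ⟨?_, hIndec.1, fun Y Z _ _ e => hIndec.2 Y Z e⟩
      constructor
      intro X Y g f hf
      haveI : Mono (f.hom) := monoA_of_monoB T f hf
      obtain ⟨h', hh'⟩ := hI.factors (g.hom) (f.hom)
      exact ⟨ObjectProperty.homMk h', by ext; exact hh'⟩
    · rintro ⟨hBinj, hIndecW⟩
      refine ⟨hInj _ hBinj, hIndecW.1, ?_⟩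
      intro Y Z e
      have hY : memB T Y := memB_of_mono T (biprod.inl ≫ e.hom) h
      have hZ : memB T Z := memB_of_mono T (biprod.inr ≫ e.hom) h
      exact hIndecW.2 Y Z hY hZ e
  · -- (4)
    intro I hI hTF hIndec
    have hη := unit_isIso T S adj Γ ε hΓ hI hTF
    haveI := hη
    refine ⟨T_obj_injective T S adj hI hη, ?_, ?_⟩
    · intro hz
      exact hIndec.1 (isZero_of_memB_of_torsionFree T Γ ε hΓ hz hTF)
    · intro Y Z e
      have eA : S.obj Y ⊞ S.obj Z ≅ I :=
        (addMapBiprod S Y Z).symm ≪≫ S.mapIso e ≪≫ (asIso (adj.unit.app I)).symm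
      rcases hIndec.2 _ _ eA with hz | hz
      · exact Or.inl ((T.map_isZero hz).of_iso (asIso (adj.counit.app Y)).symm)
      · exact Or.inr ((T.map_isZero hz).of_iso (asIso (adj.counit.app Z)).symm)
  · -- (5)
    rintro I I' hI hTF hIndec hI' hTF' hIndec' ⟨e⟩
    have hη := unit_isIso T S adj Γ ε hΓ hI hTF
    have hη' := unit_isIso T S adj Γ ε hΓ hI' hTF'
    haveI := hη
    haveI := hη'
    exact ⟨asIso (adj.unit.app I) ≪≫ S.mapIso e ≪≫ (asIso (adj.unit.app I')).symm⟩
  · -- (6)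
    intro J hJ hJIndec
    haveI := hJ
    refine ⟨S.obj J, Injective.injective_of_adjoint adj J,
      gammaS_isZero T S adj Γ ε hΓ J, ⟨?_, ?_⟩, ⟨asIso (adj.counit.app J)⟩⟩
    · intro hz
      exact hJIndec.1 ((T.map_isZero hz).of_iso (asIso (adj.counit.app J)).symm)
    · intro Y Z e
      have eQ : T.obj Y ⊞ T.obj Z ≅ J :=
        (addMapBiprod T Y Z).symm ≪≫ T.mapIso e ≪≫ asIso (adj.counit.app J)
      rcases hJIndec.2 _ _ eQ with hz | hz
      · left
        have h0 : (biprod.inl ≫ e.hom : Y ⟶ S.obj J) = 0 := hom_to_S_eq_zero T S adj hz _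
        exact IsZero.of_mono_eq_zero _ h0
      · right
        have h0 : (biprod.inr ≫ e.hom : Z ⟶ S.obj J) = 0 := hom_to_S_eq_zero T S adj hz _
        exact IsZero.of_mono_eq_zero _ h0
end

section
/- Let A be a Grothendieck abelian category and B a localizing subcategory satisfying (Inj). For every object M of A there is an exact sequence 0 → Γ(M) → M → Σ(M) → R^1Γ(M) → 0 (the two middle maps being the canonical ones), and there are natural isomorphisms R^iΣ(M) ≅ R^{i+1}Γ(M) for all i ≥ 1. -/
/-!
STATEMENT 5. Let `A` be a Grothendieck abelian category and `B` a localizing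
subcategory satisfying (Inj).  For every object `M` of `A` there is an exact
sequence `0 → Γ(M) → M → Σ(M) → R¹Γ(M) → 0` (the two middle maps being the
canonical ones), and there are natural isomorphisms `R^iΣ(M) ≅ R^{i+1}Γ(M)`
for all `i ≥ 1`.

Encoding: `B = ker T` for an exact localization functor `T : A ⥤ Q` with fully
faithful right adjoint (section functor) `S`; the saturation functor is
`Σ = T ⋙ S` with unit `adj.unit`, and the torsion functor `Γ` is characterized
by `IsTorsionFunctor`.  The four term exact sequence is expressed by: the first
map is a monomorphism, the sequence is exact at `M` and at `Σ(M)` (for some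
connecting map `δ : Σ(M) ⟶ R¹Γ(M)`), and `δ` is an epimorphism.
-/

open CategoryTheory Limits

universe v u u'

variable {A : Type u} [Category.{v} A] [Abelian A]
variable {Q : Type u'} [Category.{v} Q] [Abelian Q]

set_option linter.unusedSectionVars false

section Aux

variable (T : A ⥤ Q) (S : Q ⥤ A) (adj : T ⊣ S)
variable [T.Additive] [S.Additive] [PreservesFiniteLimits T] [IsIso adj.counit]
variable (Γ : A ⥤ A) (ε : Γ ⟶ 𝟭 A) [Γ.Additive] (hΓ : IsTorsionFunctor T Γ ε)

include adj in
lemma memB_of_epi {X Y : A} (e : X ⟶ Y) [Epi e] (hX : memB T X) : memB T Y := by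
  have : PreservesColimits T := adj.leftAdjoint_preservesColimits
  have : Epi (T.map e) := inferInstance
  rw [memB, IsZero.iff_id_eq_zero]
  have h0 : T.map e = 0 := hX.eq_of_src _ _
  rw [← cancel_epi (T.map e), h0, comp_zero, zero_comp]

lemma memB_of_mono_s5 {X Y : A} (m : X ⟶ Y) [Mono m] (hY : memB T Y) : memB T X := by
  have : Mono (T.map m) := T.map_mono m
  rw [memB, IsZero.iff_id_eq_zero]
  have h0 : T.map m = 0 := hY.eq_of_tgt _ _
  rw [← cancel_mono (T.map m), h0, comp_zero, zero_comp]

include adj hΓ in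
/-- any morphism from a torsion object factors through `Γ` -/
lemma torsion_factors {N M : A} (f : N ⟶ M) (hN : memB T N) :
    ∃ g : N ⟶ Γ.obj M, g ≫ ε.app M = f := by
  have : memB T (image f) := memB_of_epi T S adj (factorThruImage f) hN
  obtain ⟨g, hg⟩ := hΓ.isMax M (image f) (image.ι f) inferInstance this
  exact ⟨factorThruImage f ≫ g, by rw [Category.assoc, hg, image.fac]⟩

include hΓ in
lemma eps_eta_zero (M : A) : ε.app M ≫ adj.unit.app M = 0 := by
  have h := adj.unit.naturality (ε.app M)
  have hz : IsZero ((T ⋙ S).obj (Γ.obj M)) := S.map_isZero (hΓ.mem M)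
  have : adj.unit.app (Γ.obj M) = 0 := hz.eq_of_tgt _ _
  calc ε.app M ≫ adj.unit.app M = adj.unit.app (Γ.obj M) ≫ (T ⋙ S).map (ε.app M) := by
        simpa using h.symm
    _ = 0 := by rw [this, zero_comp]

lemma isIso_T_unit (M : A) : IsIso (T.map (adj.unit.app M)) := by
  have h : T.map (adj.unit.app M) ≫ adj.counit.app (T.obj M) = 𝟙 _ :=
    adj.left_triangle_components M
  exact IsIso.of_isIso_fac_right h

include adj in
lemma hom_to_S_zero {N : A} {X : Q} (f : N ⟶ S.obj X) (hN : memB T N) : f = 0 := by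
  have : f = adj.homEquiv N X ((adj.homEquiv N X).symm f) := (Equiv.apply_symm_apply _ _).symm
  rw [this, show (adj.homEquiv N X).symm f = 0 from hN.eq_of_src _ _]
  simp [Adjunction.homEquiv_apply]

include hΓ in
lemma exact_at_M (M : A) :
    (ShortComplex.mk (ε.app M) (adj.unit.app M) (eps_eta_zero T S adj Γ ε hΓ M)).Exact := by
  set Sc := ShortComplex.mk (ε.app M) (adj.unit.app M) (eps_eta_zero T S adj Γ ε hΓ M) with hSc
  -- the kernel of the unit is torsion
  have hker : memB T (kernel (adj.unit.app M)) := by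
    have : IsIso (T.map (adj.unit.app M)) := isIso_T_unit T S adj M
    have : Mono (T.map (adj.unit.app M)) := inferInstance
    have h0 : T.map (kernel.ι (adj.unit.app M)) ≫ T.map (adj.unit.app M) = 0 := by
      rw [← T.map_comp, kernel.condition, T.map_zero]
    have hz0 : T.map (kernel.ι (adj.unit.app M)) = 0 :=
      (cancel_mono (T.map (adj.unit.app M))).1 (by rw [h0, zero_comp])
    have hm : Mono (T.map (kernel.ι (adj.unit.app M))) := T.map_mono _
    rw [memB, IsZero.iff_id_eq_zero]
    have := (cancel_mono (T.map (kernel.ι (adj.unit.app M)))).1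
      (show 𝟙 _ ≫ _ = 0 ≫ _ by rw [hz0, comp_zero, zero_comp])
    exact this
  obtain ⟨g, hg⟩ := hΓ.isMax M _ (kernel.ι (adj.unit.app M)) inferInstance hker
  rw [ShortComplex.exact_iff_epi_toCycles]
  have hsec : (Sc.cyclesIsoKernel.hom ≫ g) ≫ Sc.toCycles = 𝟙 Sc.cycles := by
    have : Mono Sc.iCycles := inferInstance
    rw [← cancel_mono Sc.iCycles, Category.assoc, Category.assoc, Sc.toCycles_i,
      Category.id_comp]
    show Sc.cyclesIsoKernel.hom ≫ g ≫ ε.app M = Sc.iCycles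
    rw [hg, ShortComplex.cyclesIsoKernel_hom, kernel.lift_ι]
  have : IsSplitEpi Sc.toCycles := ⟨⟨⟨_, hsec⟩⟩⟩
  infer_instance

end Aux

section Inj

variable (T : A ⥤ Q) (S : Q ⥤ A) (adj : T ⊣ S)
variable [T.Additive] [S.Additive] [PreservesFiniteLimits T] [IsIso adj.counit]
variable (Γ : A ⥤ A) (ε : Γ ⟶ 𝟭 A) [Γ.Additive] (hΓ : IsTorsionFunctor T Γ ε)

lemma mono_in_B {X Y : ObjectProperty.FullSubcategory (memB T)} (f : X ⟶ Y) (hf : Mono f) :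
    Mono f.hom := by
  apply Abelian.mono_of_kernel_ι_eq_zero
  set k : kernel f.hom ⟶ X.obj := kernel.ι _ with hk
  have hmem : memB T (kernel f.hom) :=
    memB_of_mono_s5 T k X.property
  let K : ObjectProperty.FullSubcategory (memB T) := ⟨_, hmem⟩
  have : (ObjectProperty.homMk k : K ⟶ X) ≫ f = (ObjectProperty.homMk 0 : K ⟶ X) ≫ f := by
    ext
    show k ≫ f.hom = 0 ≫ f.hom
    rw [kernel.condition, zero_comp]
  have h0 : (ObjectProperty.homMk k : K ⟶ X) = ObjectProperty.homMk 0 := by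
    rw [← cancel_mono f]
    exact this
  exact congrArg InducedCategory.Hom.hom h0

include S adj hΓ in
lemma gamma_injective
    (hInj : ∀ J : ObjectProperty.FullSubcategory (memB T), Injective J → Injective J.obj)
    (I : A) [Injective I] : Injective (Γ.obj I) := by
  refine hInj ⟨Γ.obj I, hΓ.mem I⟩ ⟨?_⟩
  intro X Y g f hm
  -- g : X ⟶ ⟨Γ I⟩, f : X ⟶ Y mono in the subcategory
  have hmA : Mono f.hom := mono_in_B T f hm
  -- extend g ≫ ε over f using injectivity of I
  have : Injective I := inferInstance
  obtain ⟨h, hh⟩ := this.factors (g.hom ≫ ε.app I)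
    f.hom
  obtain ⟨h', hh'⟩ := torsion_factors T S adj Γ ε hΓ h Y.property
  refine ⟨ObjectProperty.homMk h', ?_⟩
  ext
  show f.hom ≫ h' = g.hom
  have := hΓ.mono I
  rw [← cancel_mono (ε.app I), Category.assoc, hh', hh]

end Inj

section EpiEta

variable (T : A ⥤ Q) (S : Q ⥤ A) (adj : T ⊣ S)
variable [T.Additive] [S.Additive] [PreservesFiniteLimits T] [IsIso adj.counit]
variable (Γ : A ⥤ A) (ε : Γ ⟶ 𝟭 A) [Γ.Additive] (hΓ : IsTorsionFunctor T Γ ε)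

include hΓ in
lemma epi_eta_injective
    (hInj : ∀ J : ObjectProperty.FullSubcategory (memB T), Injective J → Injective J.obj)
    (I : A) [Injective I] : Epi (adj.unit.app I) := by
  have hPC : PreservesColimits T := adj.leftAdjoint_preservesColimits
  have hGI : Injective (Γ.obj I) := gamma_injective T S adj Γ ε hΓ hInj I
  have hεm' : Mono (ε.app I) := hΓ.mono I
  set εI : Γ.obj I ⟶ I := ε.app I with hεI
  have hεm : Mono εI := hεm'
  -- a retraction of ε
  set r : I ⟶ Γ.obj I := Injective.factorThru (𝟙 (Γ.obj I)) εI with hr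
  have hεr : εI ≫ r = 𝟙 _ := Injective.comp_factorThru _ _
  set π : I ⟶ cokernel εI := cokernel.π εI with hπ
  set s : I ⟶ I := 𝟙 I - r ≫ εI with hs
  have hcond : εI ≫ s = 0 := by
    rw [hs, Preadditive.comp_sub, Category.comp_id, ← Category.assoc, hεr, Category.id_comp,
      sub_self]
  set t : cokernel εI ⟶ I := cokernel.desc εI s hcond with ht
  have hπt : π ≫ t = s := cokernel.π_desc _ _ _
  have htπ : t ≫ π = 𝟙 _ := by
    rw [← cancel_epi π, ← Category.assoc, hπt, hs]
    rw [Preadditive.sub_comp, Category.id_comp, Category.assoc, cokernel.condition, comp_zero,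
      sub_zero, Category.comp_id]
  set u : cokernel εI ⟶ S.obj (T.obj I) :=
    cokernel.desc εI (adj.unit.app I) (eps_eta_zero T S adj Γ ε hΓ I) with hu
  have hπu : π ≫ u = adj.unit.app I := cokernel.π_desc _ _ _
  -- T.map ε = 0
  have hTε : T.map εI = 0 := (hΓ.mem I).eq_of_src _ _
  -- T.map π is an isomorphism
  have hTπ : IsIso (T.map π) := by
    refine ⟨T.map t, ?_, ?_⟩
    · rw [← T.map_comp, hπt, hs]
      rw [T.map_sub, T.map_comp, hTε, comp_zero, sub_zero, T.map_id]
    · rw [← T.map_comp, htπ, T.map_id]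
  have hTη : IsIso (T.map (adj.unit.app I)) := isIso_T_unit T S adj I
  have hTu : IsIso (T.map u) := by
    have : T.map π ≫ T.map u = T.map (adj.unit.app I) := by rw [← T.map_comp, hπu]
    exact IsIso.of_isIso_fac_left this
  -- u is a monomorphism
  have hum : Mono u := by
    apply Abelian.mono_of_kernel_ι_eq_zero
    have hkmem : memB T (kernel u) := by
      have h0 : T.map (kernel.ι u) = 0 := by
        have : Mono (T.map u) := inferInstance
        refine (cancel_mono (T.map u)).1 ?_
        rw [← T.map_comp, kernel.condition, T.map_zero, zero_comp]
      have : Mono (T.map (kernel.ι u)) := T.map_mono _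
      rw [memB, IsZero.iff_id_eq_zero]
      exact (cancel_mono (T.map (kernel.ι u))).1
        (by rw [h0, comp_zero, zero_comp])
    have htm : Mono t := by
      have : IsSplitMono t := ⟨⟨⟨π, htπ⟩⟩⟩
      infer_instance
    have : Mono (kernel.ι u ≫ t) := mono_comp _ _
    obtain ⟨g, hg⟩ := hΓ.isMax I _ (kernel.ι u ≫ t) this hkmem
    have : kernel.ι u = 0 := by
      have h1 : kernel.ι u ≫ t ≫ π = kernel.ι u := by rw [htπ, Category.comp_id]
      rw [← h1, ← Category.assoc, ← hg, Category.assoc, cokernel.condition, comp_zero]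
    exact this
  -- C := cokernel ε is injective (it is a retract of I)
  have hCinj : Injective (cokernel εI) := by
    constructor
    intro X Y g f hm
    obtain ⟨h, hh⟩ := Injective.factors (g ≫ t) f
    exact ⟨h ≫ π, by rw [← Category.assoc, hh, Category.assoc, htπ, Category.comp_id]⟩
  -- a retraction of u
  set v : S.obj (T.obj I) ⟶ cokernel εI := Injective.factorThru (𝟙 _) u with hv
  have huv : u ≫ v = 𝟙 _ := Injective.comp_factorThru _ _
  -- the cokernel of u is torsion
  have hcoker : memB T (cokernel u) := by
    have hTcoker : T.map (cokernel.π u) = 0 := by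
      have : IsIso (T.map u) := hTu
      refine (cancel_epi (T.map u)).1 ?_
      rw [← T.map_comp, cokernel.condition, T.map_zero, comp_zero]
    have : Epi (T.map (cokernel.π u)) := inferInstance
    rw [memB, IsZero.iff_id_eq_zero]
    exact (cancel_epi (T.map (cokernel.π u))).1 (by rw [hTcoker, comp_zero, zero_comp])
  -- hence v is a section as well : u is an isomorphism
  have hq : 𝟙 (S.obj (T.obj I)) - v ≫ u = 0 := by
    have h0 : u ≫ (𝟙 (S.obj (T.obj I)) - v ≫ u) = 0 := by
      simp [Preadditive.comp_sub, ← Category.assoc, huv]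
    set qbar : cokernel u ⟶ S.obj (T.obj I) := cokernel.desc u _ h0 with hqbar
    have : cokernel.π u ≫ qbar = 𝟙 (S.obj (T.obj I)) - v ≫ u := cokernel.π_desc _ _ _
    rw [← this, hom_to_S_zero T S adj qbar hcoker, comp_zero]
  have hvu : v ≫ u = 𝟙 _ := by
    have := sub_eq_zero.1 hq
    exact this.symm
  have : IsIso u := ⟨v, by
    rw [← cancel_mono u, Category.assoc, hvu, Category.comp_id, Category.id_comp], hvu⟩
  rw [← hπu]
  exact epi_comp _ _

include hΓ in
lemma ses_injective
    (hInj : ∀ J : ObjectProperty.FullSubcategory (memB T), Injective J → Injective J.obj)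
    (I : A) [Injective I] :
    (ShortComplex.mk (ε.app I) (adj.unit.app I) (eps_eta_zero T S adj Γ ε hΓ I)).ShortExact := by
  have := hΓ.mono I
  have := epi_eta_injective T S adj Γ ε hΓ hInj I
  exact ⟨exact_at_M T S adj Γ ε hΓ I⟩

end EpiEta

section Complexes

variable (T : A ⥤ Q) (S : Q ⥤ A) (adj : T ⊣ S)
variable [T.Additive] [S.Additive] [PreservesFiniteLimits T] [IsIso adj.counit]
variable (Γ : A ⥤ A) (ε : Γ ⟶ 𝟭 A) [Γ.Additive] (hΓ : IsTorsionFunctor T Γ ε)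

/-- The short complex of cochain complexes `Γ(I⁰) → I⁰ → Σ(I⁰)` etc. -/
abbrev sesC {M : A} (I : InjectiveResolution M) :
    ShortComplex (CochainComplex A ℕ) :=
  ShortComplex.mk
    ((NatTrans.mapHomologicalComplex ε (ComplexShape.up ℕ)).app I.cocomplex)
    ((NatTrans.mapHomologicalComplex adj.unit (ComplexShape.up ℕ)).app I.cocomplex)
    (by
      ext n
      exact eps_eta_zero T S adj Γ ε hΓ (I.cocomplex.X n))

include hΓ in
lemma sesC_shortExact
    (hInj : ∀ J : ObjectProperty.FullSubcategory (memB T), Injective J → Injective J.obj)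
    {M : A} (I : InjectiveResolution M) :
    (sesC T S adj Γ ε hΓ I).ShortExact := by
  rw [HomologicalComplex.shortExact_iff_degreewise_shortExact]
  intro n
  have : Injective (I.cocomplex.X n) := I.injective n
  exact ses_injective T S adj Γ ε hΓ hInj (I.cocomplex.X n)

lemma isZero_middle_homology {M : A} (I : InjectiveResolution M) (n : ℕ) :
    IsZero (((((𝟭 A).mapHomologicalComplex (ComplexShape.up ℕ)).obj I.cocomplex)).homology
      (n + 1)) := by
  have h := I.cocomplex_exactAt_succ n
  rw [HomologicalComplex.exactAt_iff_isZero_homology] at h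
  exact h.of_iso ((HomologicalComplex.homologyFunctor A _ (n+1)).mapIso
    (((Functor.mapHomologicalComplexIdIso A (ComplexShape.up ℕ))).app I.cocomplex))

end Complexes

section Part1

variable (T : A ⥤ Q) (S : Q ⥤ A) (adj : T ⊣ S)
variable [T.Additive] [S.Additive] [PreservesFiniteLimits T] [IsIso adj.counit]
variable (Γ : A ⥤ A) (ε : Γ ⟶ 𝟭 A) [Γ.Additive] (hΓ : IsTorsionFunctor T Γ ε)

include hΓ in
lemma unit_cycles_square {M : A} (I : InjectiveResolution M) :
    adj.unit.app M ≫ I.toRightDerivedZero' (T ⋙ S) =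
      I.toRightDerivedZero' (𝟭 A) ≫
        HomologicalComplex.cyclesMap ((sesC T S adj Γ ε hΓ I).g) 0 := by
  have : Mono (HomologicalComplex.iCycles
      (((T ⋙ S).mapHomologicalComplex (ComplexShape.up ℕ)).obj I.cocomplex) 0) :=
    inferInstance
  rw [← cancel_mono (HomologicalComplex.iCycles
    (((T ⋙ S).mapHomologicalComplex (ComplexShape.up ℕ)).obj I.cocomplex) 0)]
  rw [Category.assoc, InjectiveResolution.toRightDerivedZero'_comp_iCycles]
  rw [Category.assoc, HomologicalComplex.cyclesMap_i,
    ← Category.assoc, InjectiveResolution.toRightDerivedZero'_comp_iCycles]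
  exact (adj.unit.naturality (I.ι.f 0)).symm

include hΓ in
lemma part1_data
    [EnoughInjectives A]
    (hInj : ∀ J : ObjectProperty.FullSubcategory (memB T), Injective J → Injective J.obj)
    (M : A) :
    ∃ (δ : (T ⋙ S).obj M ⟶ (Γ.rightDerived 1).obj M)
      (w' : adj.unit.app M ≫ δ = 0),
      (ShortComplex.mk (adj.unit.app M) δ w').Exact ∧ Epi δ := by
  haveI : PreservesLimits S := adj.rightAdjoint_preservesLimits
  haveI : PreservesFiniteLimits (T ⋙ S) := comp_preservesFiniteLimits T S
  set I := injectiveResolution M with hI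
  set Ses := sesC T S adj Γ ε hΓ I with hSes
  have hSE : Ses.ShortExact := sesC_shortExact T S adj Γ ε hΓ hInj I
  set δ₀ : Ses.X₃.homology 0 ⟶ Ses.X₁.homology 1 := hSE.δ 0 1 rfl with hδ₀
  set b : (T ⋙ S).obj M ⟶ Ses.X₃.homology 0 :=
    I.toRightDerivedZero' (T ⋙ S) ≫ Ses.X₃.isoHomologyπ₀.hom with hb
  haveI : IsIso b := by
    rw [hb]
    infer_instance
  set m : M ⟶ Ses.X₂.homology 0 :=
    I.toRightDerivedZero' (𝟭 A) ≫ Ses.X₂.isoHomologyπ₀.hom with hm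
  haveI : IsIso m := by
    rw [hm]
    infer_instance
  have hsq : adj.unit.app M ≫ b = m ≫ HomologicalComplex.homologyMap Ses.g 0 := by
    rw [hb, hm, ← Category.assoc, unit_cycles_square T S adj Γ ε hΓ I]
    simp only [HomologicalComplex.isoHomologyπ_hom, Category.assoc]
    rw [HomologicalComplex.homologyπ_naturality]
  refine ⟨b ≫ δ₀ ≫ (I.isoRightDerivedObj Γ 1).inv, ?_, ?_, ?_⟩
  · rw [← Category.assoc, hsq, Category.assoc, hδ₀]
    erw [hSE.comp_δ_assoc]
    exact (congrArg (m ≫ ·) zero_comp).trans comp_zero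
  · refine ShortComplex.exact_of_iso (Iso.symm ?_) (hSE.homology_exact₃ 0 1 rfl)
    refine ShortComplex.isoMk (asIso m) (asIso b) (I.isoRightDerivedObj Γ 1) ?_ ?_
    · exact hsq.symm
    · exact ((Category.assoc _ _ _).trans (congrArg (b ≫ ·) ((Category.assoc _ _ _).trans
        ((congrArg (δ₀ ≫ ·) (Iso.inv_hom_id _)).trans (Category.comp_id _))))).symm
  · have hg0 : HomologicalComplex.homologyMap Ses.f 1 = 0 :=
      (isZero_middle_homology I 0).eq_of_tgt _ _
    haveI : Epi δ₀ := (hSE.homology_exact₁ 0 1 rfl).epi_f hg0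
    exact epi_comp' inferInstance (epi_comp' inferInstance (IsIso.epi_of_iso (I.isoRightDerivedObj Γ 1).inv))

end Part1

section Part2

variable (T : A ⥤ Q) (S : Q ⥤ A) (adj : T ⊣ S)
variable [T.Additive] [S.Additive] [PreservesFiniteLimits T] [IsIso adj.counit]
variable (Γ : A ⥤ A) (ε : Γ ⟶ 𝟭 A) [Γ.Additive] (hΓ : IsTorsionFunctor T Γ ε)

lemma sesC_delta_isIso
    (hInj : ∀ J : ObjectProperty.FullSubcategory (memB T), Injective J → Injective J.obj)
    {M : A} (I : InjectiveResolution M) (k : ℕ)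
    (hSE : (sesC T S adj Γ ε hΓ I).ShortExact) :
    IsIso (hSE.δ (k+1) (k+1+1) rfl) := by
  have hmono : Mono (hSE.δ (k+1) (k+1+1) rfl) := by
    have hf0 : HomologicalComplex.homologyMap (sesC T S adj Γ ε hΓ I).g (k+1) = 0 :=
      (isZero_middle_homology I k).eq_of_src _ _
    exact (hSE.homology_exact₃ (k+1) (k+1+1) rfl).mono_g hf0
  have hepi : Epi (hSE.δ (k+1) (k+1+1) rfl) := by
    have hg0 : HomologicalComplex.homologyMap (sesC T S adj Γ ε hΓ I).f (k+1+1) = 0 :=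
      (isZero_middle_homology I (k+1)).eq_of_tgt _ _
    exact (hSE.homology_exact₁ (k+1) (k+1+1) rfl).epi_f hg0
  exact isIso_of_mono_of_epi _

/-- The morphism of short exact sequences of complexes induced by `f : M ⟶ M'`. -/
noncomputable def sesCHom {M M' : A} (f : M ⟶ M') (I : InjectiveResolution M)
    (I' : InjectiveResolution M') :
    sesC T S adj Γ ε hΓ I ⟶ sesC T S adj Γ ε hΓ I' where
  τ₁ := (Γ.mapHomologicalComplex _).map (InjectiveResolution.desc f I' I)
  τ₂ := ((𝟭 A).mapHomologicalComplex _).map (InjectiveResolution.desc f I' I)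
  τ₃ := ((T ⋙ S).mapHomologicalComplex _).map (InjectiveResolution.desc f I' I)
  comm₁₂ := (NatTrans.mapHomologicalComplex ε (ComplexShape.up ℕ)).naturality
    (InjectiveResolution.desc f I' I)
  comm₂₃ := (NatTrans.mapHomologicalComplex adj.unit (ComplexShape.up ℕ)).naturality
    (InjectiveResolution.desc f I' I)

include adj hΓ in
lemma part2 [EnoughInjectives A]
    (hInj : ∀ J : ObjectProperty.FullSubcategory (memB T), Injective J → Injective J.obj)
    (k : ℕ) :
    Nonempty ((T ⋙ S).rightDerived (k+1) ≅ Γ.rightDerived (k+1+1)) := by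
  have hSE : ∀ M : A, (sesC T S adj Γ ε hΓ (injectiveResolution M)).ShortExact :=
    fun M => sesC_shortExact T S adj Γ ε hΓ hInj (injectiveResolution M)
  have hiso : ∀ M : A, IsIso ((hSE M).δ (k+1) (k+1+1) rfl) :=
    fun M => sesC_delta_isIso T S adj Γ ε hΓ hInj (injectiveResolution M) k (hSE M)
  refine ⟨NatIso.ofComponents (fun M =>
    (injectiveResolution M).isoRightDerivedObj (T ⋙ S) (k+1) ≪≫
      (@asIso _ _ _ _ _ (hiso M)) ≪≫
        ((injectiveResolution M).isoRightDerivedObj Γ (k+1+1)).symm) ?_⟩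
  intro M M' f
  set I := injectiveResolution M
  set I' := injectiveResolution M'
  set g := InjectiveResolution.desc f I' I with hg
  have w : I.ι ≫ g = (CochainComplex.single₀ A).map f ≫ I'.ι :=
    InjectiveResolution.desc_commutes f I' I
  rw [Functor.rightDerived_map_eq (T ⋙ S) (k+1) f g w,
    Functor.rightDerived_map_eq Γ (k+1+1) f g w]
  have δnat := HomologicalComplex.HomologySequence.δ_naturality
    (sesCHom T S adj Γ ε hΓ f I I') (hSE M) (hSE M') (k+1) (k+1+1) rfl
  have key := δnat
  simp only [sesCHom] at key
  rw [← hg] at key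
  simp only [Iso.trans_hom, Iso.symm_hom, asIso_hom, Functor.comp_map, Category.assoc]
  erw [Iso.inv_hom_id_assoc]
  congr 1
  erw [Category.assoc, Iso.inv_hom_id_assoc, reassoc_of% key]
  rfl

end Part2

theorem statement5
    -- `A` is Grothendieck abelian (in particular it has enough injectives):
    [HasColimits A] [AB5 A] [HasSeparator A] [EnoughInjectives A]
    -- the localization functor `T` and the section functor `S`:
    (T : A ⥤ Q) (S : Q ⥤ A) (adj : T ⊣ S)
    [T.Additive] [S.Additive] [PreservesFiniteLimits T] [IsIso adj.counit]
    -- property (Inj): injective objects of `B` remain injective in `A`: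
    (hInj : ∀ J : ObjectProperty.FullSubcategory (memB T), Injective J → Injective J.obj)
    -- the torsion functor `Γ`:
    (Γ : A ⥤ A) (ε : Γ ⟶ 𝟭 A) [Γ.Additive] (hΓ : IsTorsionFunctor T Γ ε) :
    -- the exact sequence `0 → Γ(M) → M → Σ(M) → R¹Γ(M) → 0`:
    (∀ M : A,
      Mono (ε.app M) ∧
      ∃ (w : ε.app M ≫ adj.unit.app M = 0)
        (δ : (T ⋙ S).obj M ⟶ (Γ.rightDerived 1).obj M)
        (w' : adj.unit.app M ≫ δ = 0),
        (ShortComplex.mk (ε.app M) (adj.unit.app M) w).Exact ∧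
        (ShortComplex.mk (adj.unit.app M) δ w').Exact ∧
        Epi δ) ∧
    -- natural isomorphisms `R^iΣ ≅ R^{i+1}Γ` for `i ≥ 1`:
    (∀ i : ℕ, 1 ≤ i →
      Nonempty ((T ⋙ S).rightDerived i ≅ Γ.rightDerived (i + 1))) := by
  constructor
  · intro M
    obtain ⟨δ, w', hex, hepi⟩ := part1_data T S adj Γ ε hΓ hInj M
    exact ⟨hΓ.mono M, eps_eta_zero T S adj Γ ε hΓ M, δ, w',
      exact_at_M T S adj Γ ε hΓ M, hex, hepi⟩
  · intro i hi
    obtain ⟨k, rfl⟩ : ∃ k, i = k + 1 := ⟨i - 1, (Nat.succ_pred_eq_of_pos hi).symm⟩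
    exact part2 T S adj Γ ε hΓ hInj k
end
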